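/- Let F be an associative algebra generated by a unital subalgebra U together with a family of pairwise orthogonal idempotents {P_λ}_{λ∈I} such that for every ξ ∈ U and λ ∈ I there exist finite subsets Λ', Λ'' ⊆ I with ξ P_λ = χ_{Λ''} ξ P_λ and P_λ ξ = P_λ ξ χ_{Λ'} (where χ_Λ = Σ_{μ∈Λ} P_μ). Then the two-sided ideal R of F generated by {P_λ} admits {χ_Λ} as an approximate identity: for every r ∈ R there exists a finite Λ ⊆ I with χ_Λ r = r χ_Λ = r. -/
import Mathlib

section Aux

variable {k : Type*} [Field k] {F : Type*} [Ring F] [Algebra k F]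
    {I : Type*} [DecidableEq I] (P : I → F)

private lemma chi_mul (horth : ∀ lam mu : I, P lam * P mu = if lam = mu then P lam else 0)
    (A B : Finset I) :
    (∑ a ∈ A, P a) * (∑ b ∈ B, P b) = ∑ a ∈ A ∩ B, P a := by
  rw [Finset.sum_mul_sum]
  calc ∑ a ∈ A, ∑ b ∈ B, P a * P b
      = ∑ a ∈ A, ∑ b ∈ B, (if a = b then P a else 0) := by
        refine Finset.sum_congr rfl fun a _ => Finset.sum_congr rfl fun b _ => horth a b
    _ = ∑ a ∈ A, (if a ∈ B then P a else 0) := by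
        refine Finset.sum_congr rfl fun a _ => ?_
        simp [Finset.sum_ite_eq]
    _ = ∑ a ∈ A ∩ B, P a := by
        rw [Finset.sum_ite_mem]

private lemma chi_absorb_left
    (horth : ∀ lam mu : I, P lam * P mu = if lam = mu then P lam else 0)
    {A B : Finset I} (h : A ⊆ B) {r : F}
    (hr : (∑ a ∈ A, P a) * r = r) : (∑ b ∈ B, P b) * r = r := by
  have : (∑ b ∈ B, P b) * ((∑ a ∈ A, P a) * r) = (∑ a ∈ A, P a) * r := by
    rw [← mul_assoc, chi_mul P horth, Finset.inter_eq_right.mpr h]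
  rw [hr] at this
  exact this

private lemma chi_absorb_right
    (horth : ∀ lam mu : I, P lam * P mu = if lam = mu then P lam else 0)
    {A B : Finset I} (h : A ⊆ B) {r : F}
    (hr : r * (∑ a ∈ A, P a) = r) : r * (∑ b ∈ B, P b) = r := by
  have : (r * (∑ a ∈ A, P a)) * (∑ b ∈ B, P b) = r * (∑ a ∈ A, P a) := by
    rw [mul_assoc, chi_mul P horth, Finset.inter_eq_left.mpr h]
  rw [hr] at this
  exact this

private lemma absorb_left (U : Subalgebra k F)
    (horth : ∀ lam mu : I, P lam * P mu = if lam = mu then P lam else 0)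
    (hgen : Algebra.adjoin k ((U : Set F) ∪ Set.range P) = ⊤)
    (habs₁ : ∀ ξ ∈ U, ∀ lam : I, ∃ Λ : Finset I,
      (∑ mu ∈ Λ, P mu) * (ξ * P lam) = ξ * P lam)
    (f : F) : ∀ Λ : Finset I, ∃ Λ' : Finset I,
      (∑ mu ∈ Λ', P mu) * (f * (∑ mu ∈ Λ, P mu)) = f * (∑ mu ∈ Λ, P mu) := by
  have hf : f ∈ Algebra.adjoin k ((U : Set F) ∪ Set.range P) := hgen ▸ trivial
  induction hf using Algebra.adjoin_induction with
  | mem x hx =>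
    rcases hx with hx | ⟨mu, rfl⟩
    · intro Λ
      choose c hc using habs₁ x hx
      refine ⟨Λ.biUnion c, ?_⟩
      rw [Finset.mul_sum, Finset.mul_sum]
      refine Finset.sum_congr rfl fun lam hlam => ?_
      exact chi_absorb_left P horth (Finset.subset_biUnion_of_mem c hlam) (hc lam)
    · intro Λ
      refine ⟨{mu}, ?_⟩
      rw [Finset.sum_singleton, ← mul_assoc, horth, if_pos rfl]
  | algebraMap r =>
    intro Λ
    refine ⟨Λ, ?_⟩
    rw [← mul_assoc, ← Algebra.commutes r, mul_assoc, chi_mul P horth, Finset.inter_self]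
  | add x y hx hy ihx ihy =>
    intro Λ
    obtain ⟨A, hA⟩ := ihx Λ
    obtain ⟨B, hB⟩ := ihy Λ
    refine ⟨A ∪ B, ?_⟩
    rw [add_mul, mul_add]
    rw [chi_absorb_left P horth Finset.subset_union_left hA,
      chi_absorb_left P horth Finset.subset_union_right hB]
  | mul x y hx hy ihx ihy =>
    intro Λ
    obtain ⟨B, hB⟩ := ihy Λ
    obtain ⟨A, hA⟩ := ihx B
    refine ⟨A, ?_⟩
    rw [mul_assoc x y, ← hB, ← mul_assoc x, ← mul_assoc, hA]

private lemma absorb_right (U : Subalgebra k F)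
    (horth : ∀ lam mu : I, P lam * P mu = if lam = mu then P lam else 0)
    (hgen : Algebra.adjoin k ((U : Set F) ∪ Set.range P) = ⊤)
    (habs₂ : ∀ ξ ∈ U, ∀ lam : I, ∃ Λ : Finset I,
      (P lam * ξ) * (∑ mu ∈ Λ, P mu) = P lam * ξ)
    (f : F) : ∀ Λ : Finset I, ∃ Λ' : Finset I,
      ((∑ mu ∈ Λ, P mu) * f) * (∑ mu ∈ Λ', P mu) = (∑ mu ∈ Λ, P mu) * f := by
  have hf : f ∈ Algebra.adjoin k ((U : Set F) ∪ Set.range P) := hgen ▸ trivial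
  induction hf using Algebra.adjoin_induction with
  | mem x hx =>
    rcases hx with hx | ⟨mu, rfl⟩
    · intro Λ
      choose c hc using habs₂ x hx
      refine ⟨Λ.biUnion c, ?_⟩
      rw [Finset.sum_mul, Finset.sum_mul]
      refine Finset.sum_congr rfl fun lam hlam => ?_
      exact chi_absorb_right P horth (Finset.subset_biUnion_of_mem c hlam) (hc lam)
    · intro Λ
      refine ⟨{mu}, ?_⟩
      rw [Finset.sum_singleton, mul_assoc, horth, if_pos rfl]
  | algebraMap r =>
    intro Λ
    refine ⟨Λ, ?_⟩
    rw [mul_assoc, Algebra.commutes, ← mul_assoc, chi_mul P horth, Finset.inter_self, ← Algebra.commutes]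
  | add x y hx hy ihx ihy =>
    intro Λ
    obtain ⟨A, hA⟩ := ihx Λ
    obtain ⟨B, hB⟩ := ihy Λ
    refine ⟨A ∪ B, ?_⟩
    rw [mul_add, add_mul]
    rw [chi_absorb_right P horth Finset.subset_union_left hA,
      chi_absorb_right P horth Finset.subset_union_right hB]
  | mul x y hx hy ihx ihy =>
    intro Λ
    obtain ⟨A, hA⟩ := ihx Λ
    obtain ⟨B, hB⟩ := ihy A
    refine ⟨B, ?_⟩
    rw [← mul_assoc _ x y, ← hA, mul_assoc _ _ y, mul_assoc, hB]

end Aux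

/-- Let `F` be an associative algebra generated by a unital
subalgebra `U` together with a family of pairwise orthogonal idempotents
`{P_λ}` such that for every `ξ ∈ U` and `λ` there are finite `Λ', Λ''` with
`ξ P_λ = χ_{Λ''} ξ P_λ` and `P_λ ξ = P_λ ξ χ_{Λ'}` (where
`χ_Λ = ∑_{μ∈Λ} P_μ`).  Then the two-sided ideal `R` of `F` generated by the
`P_λ` admits `{χ_Λ}` as an approximate identity: for each `r ∈ R` there is a
finite `Λ` with `χ_Λ r = r χ_Λ = r`. -/
theorem stmt_12 {k : Type*} [Field k] {F : Type*} [Ring F] [Algebra k F]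
    {I : Type*} [DecidableEq I]
    (U : Subalgebra k F) (P : I → F)
    (horth : ∀ lam mu : I, P lam * P mu = if lam = mu then P lam else 0)
    (hgen : Algebra.adjoin k ((U : Set F) ∪ Set.range P) = ⊤)
    (habs₁ : ∀ ξ ∈ U, ∀ lam : I, ∃ Λ : Finset I,
      (∑ mu ∈ Λ, P mu) * (ξ * P lam) = ξ * P lam)
    (habs₂ : ∀ ξ ∈ U, ∀ lam : I, ∃ Λ : Finset I,
      (P lam * ξ) * (∑ mu ∈ Λ, P mu) = P lam * ξ) :
    ∀ r ∈ TwoSidedIdeal.span (Set.range P), ∃ Λ : Finset I,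
      (∑ mu ∈ Λ, P mu) * r = r ∧ r * (∑ mu ∈ Λ, P mu) = r := by
  set S : Set F := {r | ∃ Λ : Finset I,
      (∑ mu ∈ Λ, P mu) * r = r ∧ r * (∑ mu ∈ Λ, P mu) = r} with hS
  have zero_mem : (0 : F) ∈ S := ⟨∅, by simp⟩
  have add_mem : ∀ {x y : F}, x ∈ S → y ∈ S → x + y ∈ S := by
    rintro x y ⟨A, hA₁, hA₂⟩ ⟨B, hB₁, hB₂⟩
    refine ⟨A ∪ B, ?_, ?_⟩
    · rw [mul_add, chi_absorb_left P horth Finset.subset_union_left hA₁,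
        chi_absorb_left P horth Finset.subset_union_right hB₁]
    · rw [add_mul, chi_absorb_right P horth Finset.subset_union_left hA₂,
        chi_absorb_right P horth Finset.subset_union_right hB₂]
  have neg_mem : ∀ {x : F}, x ∈ S → -x ∈ S := by
    rintro x ⟨A, hA₁, hA₂⟩
    exact ⟨A, by rw [mul_neg, hA₁], by rw [neg_mul, hA₂]⟩
  have mul_mem_left : ∀ {x y : F}, y ∈ S → x * y ∈ S := by
    rintro x y ⟨A, hA₁, hA₂⟩
    obtain ⟨B, hB⟩ := absorb_left P U horth hgen habs₁ x A
    refine ⟨A ∪ B, ?_, ?_⟩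
    · refine chi_absorb_left P horth Finset.subset_union_right ?_
      rw [← hA₁, ← mul_assoc x, ← mul_assoc, hB]
    · refine chi_absorb_right P horth Finset.subset_union_left ?_
      rw [mul_assoc, hA₂]
  have mul_mem_right : ∀ {x y : F}, x ∈ S → x * y ∈ S := by
    rintro x y ⟨A, hA₁, hA₂⟩
    obtain ⟨B, hB⟩ := absorb_right P U horth hgen habs₂ y A
    refine ⟨A ∪ B, ?_, ?_⟩
    · refine chi_absorb_left P horth Finset.subset_union_left ?_
      rw [← mul_assoc, hA₁]
    · refine chi_absorb_right P horth Finset.subset_union_right ?_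
      rw [← hA₂, mul_assoc _ _ y, mul_assoc, hB]
  intro r hr
  have := TwoSidedIdeal.mem_span_iff.mp hr
    (TwoSidedIdeal.mk' S zero_mem add_mem neg_mem mul_mem_left mul_mem_right) ?_
  · rwa [TwoSidedIdeal.mem_mk'] at this
  · rintro x ⟨mu, rfl⟩
    rw [SetLike.mem_coe, TwoSidedIdeal.mem_mk']
    exact ⟨{mu}, by rw [Finset.sum_singleton, horth, if_pos rfl],
      by rw [Finset.sum_singleton, horth, if_pos rfl]⟩
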